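/- Let n and u be natural numbers with 2 ≤ u ≤ n − 1. Let C be a k-dimensional linear subspace of (ZMod 2)^n. Let E be the set of vectors e ∈ (ZMod 2)^n such that either e = 0, or e has Hamming weight 1, or e is an end-around phased-burst error of burst length u' with error-free gap n − u' for some 2 ≤ u' ≤ u. If distinct elements of E lie in distinct cosets of C (i.e., for all e₁ ≠ e₂ in E, e₁ − e₂ ∉ C), then 2^{n−k} ≥ n · Σ_{x=0}^{u−2} Σ_{y=0}^{x} Σ_{z=0}^{n−x−3} F(x, y, z, n) + n + 1. -/

import Mathlib

/-- The Hamming weight of a binary word: the number of positions where it equals 1. -/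
def wt {α : Type*} [Fintype α] (f : α → ZMod 2) : ℕ :=
  (Finset.univ.filter fun i => f i = 1).card

/-- Cyclic index: the position `(s + j) mod n` in `Fin n`. -/
def cycIdx {n : ℕ} (s : Fin n) (j : ℕ) : Fin n :=
  ⟨(s.val + j) % n, Nat.mod_lt _ s.pos⟩

/-- `w : Fin n → ZMod 2` is an end-around phased-burst error of burst length `u`
with error-free gap `g = n - u` (where `1 ≤ g` and `2 ≤ u`). -/
def IsEndAroundBurst (n u : ℕ) (w : Fin n → ZMod 2) : Prop :=
  2 ≤ u ∧ u + 1 ≤ n ∧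
  ∃ s : Fin n,
    (∀ j, j < n - u → w (cycIdx s j) = 0) ∧
    w (cycIdx s (n - 1)) = 1 ∧
    w (cycIdx s (n - u)) = 1 ∧
    (∀ a L, a + L ≤ u → (∀ j, j < L → w (cycIdx s (n - u + a + j)) = 0) → L < n - u)

/-- `A(c, d, e) = Σ_{j ∈ J} (-1)^j · C(d+1, j) · C(c - j(e+1), d)` where
`J = { j : 0 ≤ j ≤ d + 1, c - j(e+1) ≥ 0 }`. -/
def Aform (c d e : ℕ) : ℤ :=
  ∑ j ∈ (Finset.range (d + 2)).filter (fun j => j * (e + 1) ≤ c),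
    (-1 : ℤ) ^ j * ((d + 1).choose j : ℤ) * (((c - j * (e + 1)).choose d : ℕ) : ℤ)

/-- `B(x, y, z) = A(x, y, z) - A(x, y, z - 1)`, with `A(x, y, -1) := 0`. -/
def Bform (x y z : ℕ) : ℤ :=
  Aform x y z - (if z = 0 then 0 else Aform x y (z - 1))

/-- `F(x, y, z, n) = 1` if `y = 0`, `x = z` and `x < ⌊n/2⌋ - 2`, else `B(x, y, z)`. -/
def Fform (x y z n : ℕ) : ℤ :=
  if y = 0 ∧ x = z ∧ x < n / 2 - 2 then 1 else Bform x y z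

/-- The single-burst-correction error set: `e = 0`, or `e` has Hamming weight 1, or `e`
is an end-around phased-burst error of burst length `u'` with error-free gap `n - u'`
for some `2 ≤ u' ≤ u`. -/
def SBCErrors (n u : ℕ) : Set (Fin n → ZMod 2) :=
  {e | e = 0 ∨ wt e = 1 ∨ ∃ u', 2 ≤ u' ∧ u' ≤ u ∧ IsEndAroundBurst n u' e}

/-- The single burst correction bound: if the `k`-dimensional code `C ≤ (ZMod 2)^n`
corrects the SBC error set, then
`2^(n-k) ≥ n · Σ_{x=0}^{u-2} Σ_{y=0}^{x} Σ_{z=0}^{n-x-3} F(x,y,z,n) + n + 1`. -/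

lemma card_piAntidiag_univ (d M : ℕ) :
    ((Finset.piAntidiag (Finset.univ : Finset (Fin d)) M)).card = (d + M - 1).choose M := by
  classical
  rw [← Finset.map_sym_eq_piAntidiag, Finset.card_map]
  have h : (Finset.univ : Finset (Fin d)).sym M = (Finset.univ : Finset (Sym (Fin d) M)) := by
    ext m; simp [Finset.mem_sym_iff]
  rw [h, Finset.card_univ, Sym.card_sym_eq_choose, Fintype.card_fin]

/-- number of compositions with forced large parts on `T` -/
lemma card_piAntidiag_ge (y M e : ℕ) (T : Finset (Fin (y+1))) :
    ((Finset.piAntidiag (Finset.univ : Finset (Fin (y+1))) M).filter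
        (fun g => ∀ i ∈ T, e < g i)).card
      = if T.card * (e+1) ≤ M then (M - T.card * (e+1) + y).choose y else 0 := by
  classical
  set c := T.card * (e + 1) with hc
  split_ifs with hle
  · have hcard : ((Finset.piAntidiag (Finset.univ : Finset (Fin (y+1))) (M - c))).card
        = (M - c + y).choose y := by
      rw [card_piAntidiag_univ, show (y+1) + (M - c) - 1 = M - c + y from by omega]
      have h3 := Nat.choose_symm (n := M - c + y) (k := y) (by omega)
      rw [show M - c + y - y = M - c from by omega] at h3
      exact h3
    rw [← hcard]
    apply Finset.card_bij' (i := fun g _ => fun i => g i - if i ∈ T then e+1 else 0)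
      (j := fun g _ => fun i => g i + if i ∈ T then e+1 else 0)
    · intro g hg
      simp only [Finset.mem_filter, Finset.mem_piAntidiag] at hg ⊢
      obtain ⟨⟨hsum, -⟩, hbig⟩ := hg
      refine ⟨?_, fun i _ => Finset.mem_univ i⟩
      have hpt : ∀ i ∈ (Finset.univ : Finset (Fin (y+1))), (if i ∈ T then e+1 else 0) ≤ g i := by
        intro i _
        split_ifs with h
        · exact hbig i h
        · exact Nat.zero_le _
      rw [Finset.sum_tsub_distrib Finset.univ hpt, hsum]
      congr 1
      rw [Finset.sum_ite_mem, Finset.univ_inter, Finset.sum_const, smul_eq_mul]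
    · intro g hg
      simp only [Finset.mem_piAntidiag] at hg
      obtain ⟨hsum, -⟩ := hg
      simp only [Finset.mem_filter, Finset.mem_piAntidiag]
      refine ⟨⟨?_, fun i _ => Finset.mem_univ i⟩, ?_⟩
      · rw [Finset.sum_add_distrib, hsum, Finset.sum_ite_mem, Finset.univ_inter,
          Finset.sum_const, smul_eq_mul]
        omega
      · intro i hi
        simp [hi]; omega
    · intro g hg
      funext i
      simp only [Finset.mem_filter, Finset.mem_piAntidiag] at hg
      obtain ⟨-, hbig⟩ := hg
      by_cases h : i ∈ T <;> simp [h]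
      have := hbig i h; omega
    · intro g hg
      funext i
      by_cases h : i ∈ T <;> simp [h]
  · rw [Finset.card_eq_zero]
    rw [Finset.eq_empty_iff_forall_notMem]
    intro g hg
    simp only [Finset.mem_filter, Finset.mem_piAntidiag] at hg
    obtain ⟨⟨hsum, -⟩, hbig⟩ := hg
    apply hle
    calc c = ∑ i ∈ T, (e+1) := by rw [Finset.sum_const, smul_eq_mul]
    _ ≤ ∑ i ∈ T, g i := Finset.sum_le_sum (fun i hi => hbig i hi)
    _ ≤ ∑ i ∈ Finset.univ, g i := Finset.sum_le_sum_of_subset (Finset.subset_univ T)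
    _ = M := hsum

lemma sieve (y M e : ℕ) :
    ((((Finset.piAntidiag (Finset.univ : Finset (Fin (y+1))) M)).filter
        (fun g => ∀ i, g i ≤ e)).card : ℤ)
      = ∑ j ∈ (Finset.range (y+2)).filter (fun j => j * (e+1) ≤ M),
          (-1:ℤ)^j * ((y+1).choose j : ℤ) * (((M - j*(e+1) + y).choose y : ℕ) : ℤ) := by
  classical
  set A := (Finset.piAntidiag (Finset.univ : Finset (Fin (y+1))) M) with hA
  have step1 : ((A.filter (fun g => ∀ i, g i ≤ e)).card : ℤ)
      = ∑ g ∈ A, (if ∀ i, g i ≤ e then (1:ℤ) else 0) := by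
    rw [Finset.sum_boole]
  have step2 : ∀ g : Fin (y+1) → ℕ, (if ∀ i, g i ≤ e then (1:ℤ) else 0)
      = ∑ T ∈ (Finset.univ : Finset (Fin (y+1))).powerset,
          (if ∀ i ∈ T, e < g i then (-1:ℤ)^T.card else 0) := by
    intro g
    have hps : (Finset.univ : Finset (Fin (y+1))).powerset.filter
        (fun T => ∀ i ∈ T, e < g i)
        = (Finset.univ.filter (fun i => e < g i)).powerset := by
      ext T
      simp [Finset.mem_powerset, Finset.subset_iff]
    rw [← Finset.sum_filter, hps, Finset.sum_powerset_neg_one_pow_card]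
    congr 1
    simp only [eq_iff_iff]
    rw [Finset.filter_eq_empty_iff]
    simp [not_lt]
  rw [step1]
  rw [Finset.sum_congr rfl (fun g _ => step2 g), Finset.sum_comm]
  have step3 : ∀ T ∈ (Finset.univ : Finset (Fin (y+1))).powerset,
      (∑ g ∈ A, if ∀ i ∈ T, e < g i then (-1:ℤ)^T.card else 0)
      = (-1:ℤ)^T.card * (if T.card * (e+1) ≤ M then ((M - T.card * (e+1) + y).choose y : ℤ) else 0) := by
    intro T _
    rw [← Finset.sum_filter, Finset.sum_const, hA, card_piAntidiag_ge y M e T]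
    split_ifs <;> simp [mul_comm]
  rw [Finset.sum_congr rfl step3]
  rw [Finset.sum_powerset]
  have huniv : (Finset.univ : Finset (Fin (y+1))).card = y + 1 := by simp
  rw [huniv]
  have step4 : ∀ j ∈ Finset.range (y+2),
      (∑ T ∈ Finset.powersetCard j (Finset.univ : Finset (Fin (y+1))),
        (-1:ℤ)^T.card * (if T.card * (e+1) ≤ M then ((M - T.card * (e+1) + y).choose y : ℤ) else 0))
      = ((y+1).choose j : ℤ) * ((-1:ℤ)^j * (if j * (e+1) ≤ M then ((M - j * (e+1) + y).choose y : ℤ) else 0)) := by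
    intro j _
    rw [Finset.sum_congr rfl (fun T hT => by
      rw [(Finset.mem_powersetCard.mp hT).2]), Finset.sum_const,
      Finset.card_powersetCard, huniv, nsmul_eq_mul]
  rw [Finset.sum_congr rfl step4, Finset.sum_filter]
  apply Finset.sum_congr rfl
  intro j _
  split_ifs with h <;> ring


lemma Aform_eq_card (x y e : ℕ) (hyx : y ≤ x) :
    Aform x y e = (((Finset.piAntidiag (Finset.univ : Finset (Fin (y+1))) (x - y)).filter
      (fun g => ∀ i, g i ≤ e)).card : ℤ) := by
  classical
  rw [sieve]
  unfold Aform
  rw [Finset.sum_filter, Finset.sum_filter]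
  apply Finset.sum_congr rfl
  intro j _
  by_cases h1 : j * (e+1) ≤ x - y
  · rw [if_pos h1, if_pos (by omega), show x - j*(e+1) = x - y - j*(e+1) + y from by omega]
  · rw [if_neg h1]
    by_cases h2 : j * (e+1) ≤ x
    · rw [if_pos h2, Nat.choose_eq_zero_of_lt (show x - j*(e+1) < y from by omega)]
      simp
    · rw [if_neg h2]

lemma Aform_y0 (x e : ℕ) : Aform x 0 e = if x ≤ e then 1 else 0 := by
  unfold Aform
  rw [Finset.sum_filter, Finset.sum_range_succ, Finset.sum_range_succ, Finset.sum_range_zero]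
  simp only [Nat.choose_zero_right, Nat.choose_self, pow_zero, pow_one, Nat.cast_one, zero_add,
    Nat.zero_mul, Nat.cast_ofNat, one_mul, mul_one, neg_mul, Nat.one_mul, zero_mul]
  split_ifs with h1 h2 h2 <;> norm_num <;> omega

lemma Fform_eq_Bform (x y z n : ℕ) : Fform x y z n = Bform x y z := by
  unfold Fform
  split_ifs with h
  · obtain ⟨h0, hxz, -⟩ := h
    subst h0; subst hxz
    unfold Bform
    rw [Aform_y0, if_pos le_rfl]
    split_ifs with h1
    · norm_num
    · rw [Aform_y0, if_neg (by omega)]; norm_num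
  · rfl

lemma sum_Bform (x y m : ℕ) :
    ∑ z ∈ Finset.range (m + 1), Bform x y z = Aform x y m := by
  induction m with
  | zero => simp [Bform]
  | succ m ih =>
      rw [Finset.sum_range_succ, ih]
      unfold Bform
      rw [if_neg (Nat.succ_ne_zero m)]
      simp

section Burst

open Finset

/-- positions of the ones: `Q 0 = G`, `Q (t+1) = Q t + g t + 1`. -/
def Qf (G : ℕ) {y : ℕ} (g : Fin (y+1) → ℕ) (t : ℕ) : ℕ :=
  G + t + ∑ i ∈ Finset.univ.filter (fun i : Fin (y+1) => (i : ℕ) < t), g i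

/-- the burst word associated to parameters `(s, x, y, g)`. -/
noncomputable def Wd (n : ℕ) (s : Fin n) (x y : ℕ) (g : Fin (y+1) → ℕ) : Fin n → ZMod 2 :=
  fun p => by classical exact
    if ∃ t ∈ Finset.range (y+2), p = cycIdx s (Qf (n - x - 2) g t) then 1 else 0

lemma Qf_zero (G : ℕ) {y : ℕ} (g : Fin (y+1) → ℕ) : Qf G g 0 = G := by
  simp [Qf]

lemma Qf_ge (G : ℕ) {y : ℕ} (g : Fin (y+1) → ℕ) (t : ℕ) : G ≤ Qf G g t := by
  unfold Qf; omega

lemma Qf_strictMono (G : ℕ) {y : ℕ} (g : Fin (y+1) → ℕ) : StrictMono (Qf G g) := by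
  apply strictMono_nat_of_lt_succ
  intro t
  unfold Qf
  have h : (Finset.univ.filter (fun i : Fin (y+1) => (i : ℕ) < t))
      ⊆ (Finset.univ.filter (fun i : Fin (y+1) => (i : ℕ) < t+1)) := by
    intro i hi
    simp only [Finset.mem_filter] at hi ⊢
    exact ⟨hi.1, by omega⟩
  have := Finset.sum_le_sum_of_subset (f := g) h
  omega

lemma Qf_succ (G : ℕ) {y : ℕ} (g : Fin (y+1) → ℕ) {t : ℕ} (ht : t < y + 1) :
    Qf G g (t+1) = Qf G g t + g ⟨t, ht⟩ + 1 := by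
  unfold Qf
  have h : Finset.univ.filter (fun i : Fin (y+1) => (i : ℕ) < t+1)
      = insert ⟨t, ht⟩ (Finset.univ.filter (fun i : Fin (y+1) => (i : ℕ) < t)) := by
    ext i
    simp only [Finset.mem_filter, Finset.mem_insert, Finset.mem_univ, true_and, Fin.ext_iff]
    omega
  rw [h, Finset.sum_insert (by simp)]
  omega

lemma Qf_top (G : ℕ) {y : ℕ} (g : Fin (y+1) → ℕ) {m : ℕ} (hsum : ∑ i, g i = m) :
    Qf G g (y+1) = G + y + 1 + m := by
  unfold Qf
  have h : Finset.univ.filter (fun i : Fin (y+1) => (i : ℕ) < y+1) = Finset.univ := by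
    ext i; simpa using i.isLt
  rw [h, hsum]
  omega

lemma cycIdx_add {n : ℕ} (s : Fin n) (a b : ℕ) :
    cycIdx (cycIdx s a) b = cycIdx s (a + b) := by
  unfold cycIdx
  apply Fin.ext
  show ((s.val + a) % n + b) % n = (s.val + (a + b)) % n
  rw [Nat.mod_add_mod, Nat.add_assoc]

lemma cycIdx_mod {n : ℕ} (s : Fin n) (a : ℕ) : cycIdx s (a % n) = cycIdx s a := by
  unfold cycIdx
  apply Fin.ext
  show (s.val + a % n) % n = (s.val + a) % n
  conv_rhs => rw [Nat.add_mod]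
  conv_lhs => rw [Nat.add_mod]
  rw [Nat.mod_mod_of_dvd _ dvd_rfl]

lemma cycIdx_inj {n : ℕ} (s : Fin n) {a b : ℕ} (ha : a < n) (hb : b < n) :
    cycIdx s a = cycIdx s b ↔ a = b := by
  constructor
  · intro h
    have h' : (s.val + a) % n = (s.val + b) % n := congrArg Fin.val h
    have hm : a ≡ b [MOD n] := Nat.ModEq.add_left_cancel' s.val h'
    have : a % n = b % n := hm
    rwa [Nat.mod_eq_of_lt ha, Nat.mod_eq_of_lt hb] at this
  · rintro rfl; rfl

lemma cycIdx_zero {n : ℕ} (s : Fin n) : cycIdx s 0 = s := by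
  apply Fin.ext
  show (s.val + 0) % n = s.val
  rw [Nat.add_zero, Nat.mod_eq_of_lt s.isLt]

lemma cycIdx_surj {n : ℕ} (s s' : Fin n) :
    ∃ r < n, cycIdx s r = s' := by
  refine ⟨(n + s'.val - s.val) % n, Nat.mod_lt _ s.pos, ?_⟩
  rw [cycIdx_mod]
  apply Fin.ext
  show (s.val + (n + s'.val - s.val)) % n = s'.val
  rw [show s.val + (n + s'.val - s.val) = n + s'.val from by have := s.isLt; omega,
    Nat.add_mod_left, Nat.mod_eq_of_lt s'.isLt]

section Ctx

variable {n x y : ℕ} {g : Fin (y+1) → ℕ} {s : Fin n}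

lemma Qf_le (hx : x + 3 ≤ n) (hyx : y ≤ x) (hsum : ∑ i, g i = x - y)
    {t : ℕ} (ht : t ≤ y+1) : Qf (n - x - 2) g t ≤ n - 1 := by
  have h1 := (Qf_strictMono (n - x - 2) g).monotone ht
  have h2 := Qf_top (n - x - 2) g hsum
  omega

lemma Wd_one_iff (hx : x + 3 ≤ n) (hyx : y ≤ x) (hsum : ∑ i, g i = x - y)
    {m : ℕ} (hm : m < n) :
    Wd n s x y g (cycIdx s m) = 1 ↔ ∃ t < y + 2, m = Qf (n - x - 2) g t := by
  unfold Wd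
  split_ifs with h
  · refine iff_of_true rfl ?_
    obtain ⟨t, ht, he⟩ := h
    rw [Finset.mem_range] at ht
    have hQ : Qf (n - x - 2) g t < n := by
      have := Qf_le hx hyx hsum (t := t) (by omega); omega
    exact ⟨t, ht, (cycIdx_inj s hm hQ).mp he⟩
  · refine iff_of_false (by decide) ?_
    rintro ⟨t, ht, rfl⟩
    exact h ⟨t, Finset.mem_range.mpr ht, rfl⟩

lemma Wd_zero_iff (hx : x + 3 ≤ n) (hyx : y ≤ x) (hsum : ∑ i, g i = x - y)
    {m : ℕ} (hm : m < n) :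
    Wd n s x y g (cycIdx s m) = 0 ↔ ∀ t < y + 2, m ≠ Qf (n - x - 2) g t := by
  have h1 := Wd_one_iff (s := s) hx hyx hsum hm
  constructor
  · intro h0 t ht he
    have := h1.mpr ⟨t, ht, he⟩
    rw [h0] at this
    exact absurd this (by decide)
  · intro hno
    by_contra hne
    have : Wd n s x y g (cycIdx s m) = 1 := by
      unfold Wd at hne ⊢
      split_ifs at hne ⊢ with h
      · rfl
      · exact absurd rfl hne
    obtain ⟨t, ht, he⟩ := h1.mp this
    exact hno t ht he

lemma Wd_zeros (hx : x + 3 ≤ n) (hyx : y ≤ x) (hsum : ∑ i, g i = x - y)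
    {j : ℕ} (hj : j < n - x - 2) : Wd n s x y g (cycIdx s j) = 0 := by
  rw [Wd_zero_iff hx hyx hsum (by omega)]
  intro t ht he
  have := Qf_ge (n - x - 2) g t
  omega

lemma Wd_one_G (hx : x + 3 ≤ n) (hyx : y ≤ x) (hsum : ∑ i, g i = x - y) :
    Wd n s x y g (cycIdx s (n - x - 2)) = 1 := by
  rw [Wd_one_iff hx hyx hsum (by omega)]
  exact ⟨0, by omega, (Qf_zero _ _).symm⟩

lemma Wd_one_last (hx : x + 3 ≤ n) (hyx : y ≤ x) (hsum : ∑ i, g i = x - y) :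
    Wd n s x y g (cycIdx s (n - 1)) = 1 := by
  rw [Wd_one_iff hx hyx hsum (by omega)]
  refine ⟨y + 1, by omega, ?_⟩
  rw [Qf_top (n - x - 2) g hsum]
  omega

lemma Wd_block (hx : x + 3 ≤ n) (hyx : y ≤ x) (hsum : ∑ i, g i = x - y)
    (hgle : ∀ i, g i ≤ n - x - 3) :
    ∀ a L, a + L ≤ x + 2 →
      (∀ j, j < L → Wd n s x y g (cycIdx s (n - x - 2 + a + j)) = 0) →
      L < n - x - 2 := by
  intro a L haL hz
  by_contra hL
  push_neg at hL
  have key : ∀ t, t < y + 2 → n - x - 2 + a ≤ Qf (n - x - 2) g t →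
      Qf (n - x - 2) g t < n - x - 2 + a + L → False := by
    intro t ht hBt htB
    have h1 := hz (Qf (n - x - 2) g t - (n - x - 2 + a)) (by omega)
    rw [show n - x - 2 + a + (Qf (n - x - 2) g t - (n - x - 2 + a))
        = Qf (n - x - 2) g t from by omega] at h1
    have hQn : Qf (n - x - 2) g t < n := by
      have := Qf_le hx hyx hsum (t := t) (by omega); omega
    have h2 := (Wd_one_iff (s := s) hx hyx hsum hQn).mpr ⟨t, ht, rfl⟩
    rw [h1] at h2
    exact absurd h2 (by decide)
  have hP0 : Qf (n - x - 2) g 0 ≤ n - x - 2 + a := by rw [Qf_zero]; omega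
  set t0 := Nat.findGreatest (fun t => Qf (n - x - 2) g t ≤ n - x - 2 + a) (y+1) with ht0
  have ht0le : t0 ≤ y + 1 := Nat.findGreatest_le _
  have ht0P : Qf (n - x - 2) g t0 ≤ n - x - 2 + a :=
    Nat.findGreatest_spec (P := fun t => Qf (n - x - 2) g t ≤ n - x - 2 + a)
      (m := 0) (n := y + 1) (Nat.zero_le _) hP0
  rcases Nat.lt_or_ge t0 (y+1) with hcase | hcase
  · have hnext := Nat.findGreatest_is_greatest (P := fun t => Qf (n - x - 2) g t ≤ n - x - 2 + a)
      (n := y + 1) (k := t0 + 1) (by omega) (by omega)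
    push_neg at hnext
    have hsucc := Qf_succ (n - x - 2) g (t := t0) (by omega)
    have hgb := hgle ⟨t0, by omega⟩
    rcases eq_or_lt_of_le ht0P with heq | hlt
    · exact key t0 (by omega) (by omega) (by omega)
    · exact key (t0+1) (by omega) (by omega) (by omega)
  · have htop := Qf_top (n - x - 2) g hsum
    have ht0eq : t0 = y + 1 := by omega
    rw [ht0eq] at ht0P
    exact key (y+1) (by omega) (by omega) (by omega)

lemma Wd_isBurst (hx : x + 3 ≤ n) (hyx : y ≤ x) (hsum : ∑ i, g i = x - y)
    (hgle : ∀ i, g i ≤ n - x - 3) :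
    IsEndAroundBurst n (x + 2) (Wd n s x y g) := by
  have hsub : n - (x + 2) = n - x - 2 := by omega
  refine ⟨by omega, by omega, s, ?_, ?_, ?_, ?_⟩
  · intro j hj
    rw [hsub] at hj
    exact Wd_zeros hx hyx hsum hj
  · exact Wd_one_last hx hyx hsum
  · rw [hsub]; exact Wd_one_G hx hyx hsum
  · intro a L haL hzero
    rw [hsub]
    refine Wd_block (s := s) hx hyx hsum hgle a L haL ?_
    intro j hj
    have := hzero j hj
    rwa [hsub] at this

lemma Wd_wt (hx : x + 3 ≤ n) (hyx : y ≤ x) (hsum : ∑ i, g i = x - y) :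
    2 ≤ wt (Wd n s x y g) := by
  have h1 := Wd_one_G (s := s) hx hyx hsum
  have h2 := Wd_one_last (s := s) hx hyx hsum
  have hne : cycIdx s (n - x - 2) ≠ cycIdx s (n - 1) := by
    intro h
    have := (cycIdx_inj s (by omega) (by omega)).mp h
    omega
  unfold wt
  rw [Nat.succ_le_iff, Finset.one_lt_card]
  exact ⟨_, Finset.mem_filter.mpr ⟨Finset.mem_univ _, h1⟩,
    _, Finset.mem_filter.mpr ⟨Finset.mem_univ _, h2⟩, hne⟩

end Ctx

end Burst

section Inj

lemma Wd_inj_sx {n x y x' y' : ℕ} {g : Fin (y+1) → ℕ} {g' : Fin (y'+1) → ℕ} {s s' : Fin n}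
    (hx : x + 3 ≤ n) (hyx : y ≤ x) (hsum : ∑ i, g i = x - y) (hgle : ∀ i, g i ≤ n - x - 3)
    (hx' : x' + 3 ≤ n) (hyx' : y' ≤ x') (hsum' : ∑ i, g' i = x' - y')
    (hgle' : ∀ i, g' i ≤ n - x' - 3)
    (hxx' : x' ≤ x) (hW : Wd n s x y g = Wd n s' x' y' g') : s = s' ∧ x = x' := by
  obtain ⟨r, hr, hsr⟩ := cycIdx_surj s s'
  have hcyc : ∀ m : ℕ, cycIdx s' m = cycIdx s (r + m) := by
    intro m; rw [← hsr, cycIdx_add]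
  -- facts about w := Wd n s x y g seen from the primed parameters
  have hz' : ∀ j, j < n - x' - 2 → Wd n s x y g (cycIdx s' j) = 0 := by
    intro j hj; rw [hW]; exact Wd_zeros hx' hyx' hsum' hj
  have hone' : Wd n s x y g (cycIdx s' (n - 1)) = 1 := by
    rw [hW]; exact Wd_one_last hx' hyx' hsum'
  rcases Nat.eq_zero_or_pos r with hr0 | hr1
  · subst hr0
    rw [cycIdx_zero] at hsr
    refine ⟨hsr, ?_⟩
    by_contra hxe
    have hGlt : n - x - 2 < n - x' - 2 := by omega
    have h0 := hz' (n - x - 2) hGlt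
    rw [← hsr] at h0
    rw [Wd_one_G hx hyx hsum] at h0
    exact absurd h0 (by decide)
  · exfalso
    -- the one just before the primed gap sits at relative position `r - 1`,
    -- which must be inside the burst of `w`, so `r ≥ G + 1`.
    have hlast : Wd n s x y g (cycIdx s (r - 1)) = 1 := by
      have h1 : cycIdx s' (n - 1) = cycIdx s (r - 1) := by
        rw [hcyc, ← cycIdx_mod s (r + (n - 1)),
          show (r + (n - 1)) = n + (r - 1) from by omega, Nat.add_mod_left,
          Nat.mod_eq_of_lt (by omega)]
      rw [← h1]; exact hone'
    obtain ⟨t, ht, hteq⟩ := (Wd_one_iff hx hyx hsum (by omega)).mp hlast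
    have hrG : n - x - 2 + 1 ≤ r := by
      have := Qf_ge (n - x - 2) g t; omega
    rcases Nat.lt_or_ge (r + (n - x' - 2)) n with hno | hwrap
    · -- no wrap: the primed gap is a zero block inside the burst of `w`
      have hblock := Wd_block (s := s) hx hyx hsum hgle (r - (n - x - 2)) (n - x' - 2)
        (by omega) ?_
      · omega
      · intro j hj
        rw [show n - x - 2 + (r - (n - x - 2)) + j = r + j from by omega, ← hcyc]
        exact hz' j hj
    · -- wrap: position `n - 1` would be a zero of `w`, contradiction
      have hj : n - 1 - r < n - x' - 2 := by omega
      have h0 := hz' (n - 1 - r) hj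
      rw [hcyc, show r + (n - 1 - r) = n - 1 from by omega,
        Wd_one_last hx hyx hsum] at h0
      exact absurd h0 (by decide)

lemma Wd_inj_g {n x y y' : ℕ} {g : Fin (y+1) → ℕ} {g' : Fin (y'+1) → ℕ} {s : Fin n}
    (hx : x + 3 ≤ n) (hyx : y ≤ x) (hsum : ∑ i, g i = x - y) (hgle : ∀ i, g i ≤ n - x - 3)
    (hyx' : y' ≤ x) (hsum' : ∑ i, g' i = x - y') (hgle' : ∀ i, g' i ≤ n - x - 3)
    (hW : Wd n s x y g = Wd n s x y' g') :
    (⟨y, g⟩ : Σ y : ℕ, (Fin (y+1) → ℕ)) = ⟨y', g'⟩ := by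
  have hmem : ∀ m : ℕ, (∃ t : Fin (y+2), Qf (n - x - 2) g t = m) ↔
      (∃ t : Fin (y'+2), Qf (n - x - 2) g' t = m) := by
    intro m
    constructor
    · rintro ⟨t, rfl⟩
      have hQn : Qf (n - x - 2) g t < n := by
        have := Qf_le hx hyx hsum (t := t) (by omega); omega
      have h1 := (Wd_one_iff (s := s) hx hyx hsum hQn).mpr ⟨t, t.isLt, rfl⟩
      rw [hW] at h1
      obtain ⟨t', ht', he'⟩ := (Wd_one_iff (s := s) hx hyx' hsum' hQn).mp h1
      exact ⟨⟨t', ht'⟩, he'.symm⟩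
    · rintro ⟨t, rfl⟩
      have hQn : Qf (n - x - 2) g' t < n := by
        have := Qf_le hx hyx' hsum' (t := t) (by omega); omega
      have h1 := (Wd_one_iff (s := s) hx hyx' hsum' hQn).mpr ⟨t, t.isLt, rfl⟩
      rw [← hW] at h1
      obtain ⟨t', ht', he'⟩ := (Wd_one_iff (s := s) hx hyx hsum hQn).mp h1
      exact ⟨⟨t', ht'⟩, he'.symm⟩
  set L1 := List.ofFn (fun t : Fin (y+2) => Qf (n - x - 2) g t) with hL1
  set L2 := List.ofFn (fun t : Fin (y'+2) => Qf (n - x - 2) g' t) with hL2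
  have hs1 : L1.SortedLT := by
    rw [hL1, List.sortedLT_ofFn_iff]
    intro i j hij
    exact Qf_strictMono (n - x - 2) g hij
  have hs2 : L2.SortedLT := by
    rw [hL2, List.sortedLT_ofFn_iff]
    intro i j hij
    exact Qf_strictMono (n - x - 2) g' hij
  have heq : L1 = L2 := by
    refine List.Perm.eq_of_sortedLE hs1.sortedLE hs2.sortedLE ?_
    refine List.perm_of_nodup_nodup_toFinset_eq hs1.nodup hs2.nodup ?_
    ext m
    simp only [List.mem_toFinset, hL1, hL2, List.mem_ofFn, Set.mem_range]
    exact hmem m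
  have hlen : y + 2 = y' + 2 := by
    have := congrArg List.length heq
    simpa [hL1, hL2] using this
  have hyy' : y = y' := by omega
  subst hyy'
  rw [hL1, hL2, List.ofFn_inj] at heq
  have hQ : ∀ t : Fin (y+2), Qf (n - x - 2) g t = Qf (n - x - 2) g' t :=
    fun t => congrFun heq t
  congr 1
  funext i
  have h1 := Qf_succ (n - x - 2) g (t := i.val) i.isLt
  have h2 := Qf_succ (n - x - 2) g' (t := i.val) i.isLt
  simp only [Fin.eta] at h1 h2
  have e1 := hQ ⟨i.val, by omega⟩
  have e2 := hQ ⟨i.val + 1, by omega⟩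
  simp only [] at e1 e2
  omega

end Inj

theorem stmt7 (n u k : ℕ) (hu2 : 2 ≤ u) (hun : u ≤ n - 1)
    (C : Submodule (ZMod 2) (Fin n → ZMod 2))
    (hk : Module.finrank (ZMod 2) C = k)
    (hcorr : ∀ e₁ ∈ SBCErrors n u, ∀ e₂ ∈ SBCErrors n u,
      e₁ ≠ e₂ → e₁ - e₂ ∉ C) :
    (n : ℤ) * (∑ x ∈ Finset.range (u - 1), ∑ y ∈ Finset.range (x + 1),
        ∑ z ∈ Finset.range (n - x - 2), Fform x y z n)
      + (n : ℤ) + 1 ≤ 2 ^ (n - k) := by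
  classical
  have hn3 : 3 ≤ n := by omega
  set dom : Finset (Σ _x : ℕ, Σ y : ℕ, (Fin (y+1) → ℕ)) :=
    (Finset.range (u-1)).sigma (fun x => (Finset.range (x+1)).sigma (fun y =>
      (Finset.piAntidiag (Finset.univ : Finset (Fin (y+1))) (x - y)).filter
        (fun g => ∀ i, g i ≤ n - x - 3))) with hdom
  have hmem_dom : ∀ p : (Σ _x : ℕ, Σ y : ℕ, (Fin (y+1) → ℕ)), p ∈ dom →
      p.1 + 3 ≤ n ∧ p.1 + 2 ≤ u ∧ p.2.1 ≤ p.1 ∧ (∑ i, p.2.2 i = p.1 - p.2.1) ∧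
        (∀ i, p.2.2 i ≤ n - p.1 - 3) := by
    rintro ⟨x, y, g⟩ hp
    dsimp only
    simp only [hdom, Finset.mem_sigma, Finset.mem_range, Finset.mem_filter,
      Finset.mem_piAntidiag] at hp
    obtain ⟨hx, hy, ⟨hsum, -⟩, hle⟩ := hp
    exact ⟨by omega, by omega, by omega, hsum, hle⟩
  set Ψ : Fin n × (Σ _x : ℕ, Σ y : ℕ, (Fin (y+1) → ℕ)) → (Fin n → ZMod 2) :=
    fun p => Wd n p.1 p.2.1 p.2.2.1 p.2.2.2 with hΨ
  have hinj : Set.InjOn Ψ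
      (((Finset.univ : Finset (Fin n)) ×ˢ dom :
        Finset (Fin n × Σ _x : ℕ, Σ y : ℕ, (Fin (y+1) → ℕ))) : Set _) := by
    rintro ⟨s, x, y, g⟩ h1 ⟨s', x', y', g'⟩ h2 heq
    have hd1 := hmem_dom _ (Finset.mem_product.mp (Finset.mem_coe.mp h1)).2
    have hd2 := hmem_dom _ (Finset.mem_product.mp (Finset.mem_coe.mp h2)).2
    obtain ⟨hx1, hxu1, hy1, hs1, hg1⟩ := hd1
    obtain ⟨hx2, hxu2, hy2, hs2, hg2⟩ := hd2
    simp only [hΨ] at heq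
    have hsx : s = s' ∧ x = x' := by
      rcases le_total x' x with hxx | hxx
      · exact Wd_inj_sx hx1 hy1 hs1 hg1 hx2 hy2 hs2 hg2 hxx heq
      · have := Wd_inj_sx hx2 hy2 hs2 hg2 hx1 hy1 hs1 hg1 hxx heq.symm
        exact ⟨this.1.symm, this.2.symm⟩
    obtain ⟨hss, hxx⟩ := hsx
    subst hss; subst hxx
    have hsig := Wd_inj_g hx1 hy1 hs1 hg1 hy2 hs2 hg2 heq
    exact Prod.ext rfl (congrArg (Sigma.mk x) hsig)
  set Bursts := (Finset.univ ×ˢ dom).image Ψ with hBursts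
  have hBurstscard : Bursts.card = n * dom.card := by
    rw [hBursts, Finset.card_image_of_injOn hinj, Finset.card_product, Finset.card_univ,
      Fintype.card_fin]
  have hBurstwt : ∀ v ∈ Bursts, 2 ≤ wt v := by
    intro v hv
    obtain ⟨⟨s, x, y, g⟩, hp, rfl⟩ := Finset.mem_image.mp hv
    obtain ⟨hx1, -, hy1, hs1, -⟩ := hmem_dom _ (Finset.mem_product.mp hp).2
    dsimp only at hx1 hy1 hs1 ⊢
    exact Wd_wt hx1 hy1 hs1
  have hBurstE : ∀ v ∈ Bursts, v ∈ SBCErrors n u := by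
    intro v hv
    obtain ⟨⟨s, x, y, g⟩, hp, rfl⟩ := Finset.mem_image.mp hv
    obtain ⟨hx1, hxu1, hy1, hs1, hg1⟩ := hmem_dom _ (Finset.mem_product.mp hp).2
    dsimp only at hx1 hxu1 hy1 hs1 hg1 ⊢
    exact Or.inr (Or.inr ⟨x + 2, by omega, by omega, Wd_isBurst hx1 hy1 hs1 hg1⟩)
  set Singles := Finset.univ.image (fun i : Fin n => (Pi.single i 1 : Fin n → ZMod 2))
    with hSingles
  have hsinglewt : ∀ i : Fin n, wt (Pi.single i (1:ZMod 2)) = 1 := by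
    intro i
    unfold wt
    have hset : (Finset.univ.filter fun j => (Pi.single i 1 : Fin n → ZMod 2) j = 1) = {i} := by
      ext j
      simp only [Finset.mem_filter, Finset.mem_univ, true_and, Finset.mem_singleton]
      constructor
      · intro hj
        by_contra hne
        rw [Pi.single_eq_of_ne hne] at hj
        exact absurd hj (by decide)
      · rintro rfl; rw [Pi.single_eq_same]
    rw [hset, Finset.card_singleton]
  have hsinglesinj : Set.InjOn (fun i : Fin n => (Pi.single i 1 : Fin n → ZMod 2))
      (↑(Finset.univ : Finset (Fin n)) : Set (Fin n)) := by
    intro i _ j _ hij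
    by_contra hne
    have h2 : (Pi.single i 1 : Fin n → ZMod 2) j = (Pi.single j 1 : Fin n → ZMod 2) j := congrFun hij j
    rw [Pi.single_eq_same, Pi.single_eq_of_ne (Ne.symm hne)] at h2
    exact absurd h2.symm (by decide)
  have hSinglescard : Singles.card = n := by
    rw [hSingles, Finset.card_image_of_injOn hsinglesinj, Finset.card_univ, Fintype.card_fin]
  have hwt0 : wt (0 : Fin n → ZMod 2) = 0 := by
    unfold wt
    rw [Finset.card_eq_zero, Finset.filter_eq_empty_iff]
    intro i _
    rw [Pi.zero_apply]
    decide
  have hdisj : Disjoint Singles Bursts := by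
    rw [Finset.disjoint_left]
    intro v hvS hvB
    obtain ⟨i, -, rfl⟩ := Finset.mem_image.mp hvS
    have h2 := hBurstwt _ hvB
    rw [hsinglewt i] at h2
    omega
  have h0S : (0 : Fin n → ZMod 2) ∉ Singles ∪ Bursts := by
    intro h
    rcases Finset.mem_union.mp h with h | h
    · obtain ⟨i, -, hi⟩ := Finset.mem_image.mp h
      have := hsinglewt i
      rw [hi, hwt0] at this
      omega
    · have := hBurstwt _ h
      rw [hwt0] at this
      omega
  set Final := insert (0 : Fin n → ZMod 2) (Singles ∪ Bursts) with hFinal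
  have hFinalcard : Final.card = 1 + (n + n * dom.card) := by
    rw [hFinal, Finset.card_insert_of_notMem h0S, Finset.card_union_of_disjoint hdisj,
      hSinglescard, hBurstscard]
    omega
  have hFinalE : ∀ v ∈ Final, v ∈ SBCErrors n u := by
    intro v hv
    rcases Finset.mem_insert.mp hv with rfl | hv
    · exact Or.inl rfl
    rcases Finset.mem_union.mp hv with h | h
    · obtain ⟨i, -, rfl⟩ := Finset.mem_image.mp h
      exact Or.inr (Or.inl (hsinglewt i))
    · exact hBurstE _ h
  haveI : Finite ((Fin n → ZMod 2) ⧸ C) :=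
    Finite.of_surjective _ (Submodule.Quotient.mk_surjective C)
  haveI : Fintype ((Fin n → ZMod 2) ⧸ C) := Fintype.ofFinite _
  have hcard_le : Final.card ≤ Fintype.card ((Fin n → ZMod 2) ⧸ C) := by
    rw [← Finset.card_univ]
    apply Finset.card_le_card_of_injOn (fun v => Submodule.Quotient.mk (p := C) v)
      (fun v _ => Finset.mem_univ _)
    intro a ha b hb hab
    by_contra hne
    exact hcorr a (hFinalE a (Finset.mem_coe.mp ha)) b (hFinalE b (Finset.mem_coe.mp hb)) hne
      ((Submodule.Quotient.eq C).mp hab)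
  have hrankV : Module.finrank (ZMod 2) (Fin n → ZMod 2) = n := by
    rw [Module.finrank_pi, Fintype.card_fin]
  have hrank : Module.finrank (ZMod 2) ((Fin n → ZMod 2) ⧸ C) = n - k := by
    have h1 := Submodule.finrank_quotient_add_finrank C
    rw [hk, hrankV] at h1
    omega
  have hcardQ : Fintype.card ((Fin n → ZMod 2) ⧸ C) = 2 ^ (n - k) := by
    rw [Module.card_eq_pow_finrank (K := ZMod 2), hrank, ZMod.card]
  have hdomcard : (dom.card : ℤ) = ∑ x ∈ Finset.range (u - 1), ∑ y ∈ Finset.range (x + 1),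
      ∑ z ∈ Finset.range (n - x - 2), Fform x y z n := by
    rw [hdom, Finset.card_sigma]
    push_cast
    apply Finset.sum_congr rfl
    intro x hx
    rw [Finset.card_sigma]
    push_cast
    apply Finset.sum_congr rfl
    intro y hy
    rw [Finset.mem_range] at hx hy
    have hxn : x + 3 ≤ n := by omega
    rw [Finset.sum_congr rfl (fun z _ => Fform_eq_Bform x y z n),
      show n - x - 2 = (n - x - 3) + 1 from by omega, sum_Bform,
      Aform_eq_card x y (n - x - 3) (by omega)]
  calc (n : ℤ) * (∑ x ∈ Finset.range (u - 1), ∑ y ∈ Finset.range (x + 1),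
        ∑ z ∈ Finset.range (n - x - 2), Fform x y z n) + (n : ℤ) + 1
      = (Final.card : ℤ) := by
        rw [hFinalcard, ← hdomcard]
        push_cast
        ring
    _ ≤ (Fintype.card ((Fin n → ZMod 2) ⧸ C) : ℤ) := by exact_mod_cast hcard_le
    _ = 2 ^ (n - k) := by rw [hcardQ]; push_cast; ring
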